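/- Let p₁ ≥ p₂ ≥ … ≥ pₙ > 0 be the processing times of a Partition instance, let ε be a real with 0 < ε ≤ 1, and set s := ⌈2/ε⌉ − 1; assume s < n. Then the set of makespan values attained by local optima that are not (1+ε) approximations, i.e. {f(x) : x a local optimum with f(x) > (1+ε)·y*}, has cardinality at most 2^{2/ε}. -/

import Mathlib

/-- The load of machine `b` under assignment `x` (job `i` is on machine `x i`). -/
noncomputable def load {n : ℕ} (p : Fin n → ℝ) (x : Fin n → Bool) (b : Bool) : ℝ :=
  ∑ i ∈ Finset.univ.filter (fun i => x i = b), p i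

/-- The makespan of a solution `x` of the Partition instance with processing times `p`. -/
noncomputable def makespan {n : ℕ} (p : Fin n → ℝ) (x : Fin n → Bool) : ℝ :=
  max (load p x false) (load p x true)

/-- `x` is a local optimum: no solution at Hamming distance 1 has strictly smaller makespan. -/
def IsLocalOpt {n : ℕ} (p : Fin n → ℝ) (x : Fin n → Bool) : Prop :=
  ∀ j : Fin n, ¬ makespan p (Function.update x j (!x j)) < makespan p x

/-- The optimal makespan `y*` of the instance. -/
noncomputable def optMakespan {n : ℕ} (p : Fin n → ℝ) : ℝ :=
  Finset.univ.inf' Finset.univ_nonempty (makespan p)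

lemma load_add_load {n : ℕ} (p : Fin n → ℝ) (x : Fin n → Bool) :
    load p x false + load p x true = ∑ i, p i := by
  classical
  rw [load, load, ← Finset.sum_filter_add_sum_filter_not Finset.univ (fun i => x i = false) p]
  have h : Finset.univ.filter (fun i => x i = true)
      = Finset.univ.filter (fun i => ¬ x i = false) := by
    ext i; simp
  rw [h]

lemma load_update_same {n : ℕ} (p : Fin n → ℝ) (x : Fin n → Bool) (j : Fin n) (b : Bool)
    (hj : x j = b) :
    load p (Function.update x j (!b)) b = load p x b - p j := by
  classical
  have h1 : Finset.univ.filter (fun i => Function.update x j (!b) i = b)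
      = (Finset.univ.filter (fun i => x i = b)).erase j := by
    ext i
    rcases eq_or_ne i j with rfl | h
    · simp
    · simp [Function.update_of_ne h, h]
  rw [load, h1, Finset.sum_erase_eq_sub (by simp [hj]), load]

lemma load_update_other {n : ℕ} (p : Fin n → ℝ) (x : Fin n → Bool) (j : Fin n) (b : Bool)
    (hj : x j = b) :
    load p (Function.update x j (!b)) (!b) = load p x (!b) + p j := by
  classical
  have h1 : Finset.univ.filter (fun i => Function.update x j (!b) i = (!b))
      = insert j (Finset.univ.filter (fun i => x i = (!b))) := by
    ext i
    rcases eq_or_ne i j with rfl | h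
    · simp
    · simp [Function.update_of_ne h, h]
  rw [load, h1, Finset.sum_insert (by simp [hj]), load]
  ring

/-- The number of distinct makespan values attained by local optima that are not
`(1+ε)` approximations is at most `2^(2/ε)`. -/
theorem card_bad_localOpt_makespans_le
    (n : ℕ) (p : Fin n → ℝ) (hpos : ∀ i, 0 < p i)
    (hmono : ∀ i j : Fin n, i ≤ j → p j ≤ p i)
    (ε : ℝ) (hε0 : 0 < ε) (hε1 : ε ≤ 1)
    (s : ℕ) (hs : (s : ℤ) = ⌈(2 : ℝ) / ε⌉ - 1) (hsn : s < n) :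
    (({y : ℝ | ∃ x : Fin n → Bool, IsLocalOpt p x ∧ makespan p x = y ∧
        (1 + ε) * optMakespan p < y}.ncard : ℝ))
      ≤ (2 : ℝ) ^ ((2 : ℝ) / ε) := by
  classical
  set W := ∑ i, p i with hW
  set y := optMakespan p with hy
  have hW2 : ∀ x : Fin n → Bool, W ≤ 2 * makespan p x := by
    intro x
    have h0 := load_add_load p x
    have h1 : load p x false ≤ makespan p x := le_max_left _ _
    have h2 : load p x true ≤ makespan p x := le_max_right _ _
    linarith
  have hyW : W ≤ 2 * y := by
    rw [hy, optMakespan]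
    obtain ⟨x, -, hx⟩ := Finset.exists_mem_eq_inf' Finset.univ_nonempty (makespan p)
    rw [hx]; exact hW2 x
  have hWpos : 0 < W := Finset.sum_pos (fun i _ => hpos i) ⟨⟨0, by omega⟩, Finset.mem_univ _⟩
  have hypos : 0 < y := by linarith
  have hsR : (s : ℝ) = (⌈(2:ℝ)/ε⌉ : ℤ) - 1 := by exact_mod_cast hs
  have hs1 : (2:ℝ)/ε ≤ (s:ℝ) + 1 := by
    have := Int.le_ceil ((2:ℝ)/ε)
    linarith
  have hs2 : (s:ℝ) ≤ 2/ε := by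
    have := Int.ceil_lt_add_one ((2:ℝ)/ε)
    linarith
  set L : Finset (Fin n) := Finset.univ.filter (fun i => (i:ℕ) < s) with hL
  set F : Finset ℝ := L.powerset.image (fun S => ∑ i ∈ S, p i) with hF
  have hsub : {y : ℝ | ∃ x : Fin n → Bool, IsLocalOpt p x ∧ makespan p x = y ∧
        (1 + ε) * optMakespan p < y} ⊆ ↑F := by
    rintro v ⟨x, hloc, hmk, hbad⟩
    obtain ⟨b, hb1, hb2⟩ : ∃ b, makespan p x = load p x b ∧ load p x (!b) ≤ load p x b := by
      rcases le_total (load p x false) (load p x true) with h | h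
      · exact ⟨true, by simp [makespan, max_eq_right h], by simpa using h⟩
      · exact ⟨false, by simp [makespan, max_eq_left h], by simpa using h⟩
    have key : ∀ j, x j = b → load p x b ≤ load p x (!b) + p j := by
      intro j hj
      by_contra hcon
      push_neg at hcon
      apply hloc j
      have e1 := load_update_same p x j b hj
      have e2 := load_update_other p x j b hj
      have hpj := hpos j
      have hmk' : makespan p (Function.update x j (!x j)) =
          max (load p x b - p j) (load p x (!b) + p j) := by
        rw [hj, makespan]
        cases b
        · simp only [Bool.not_false] at e1 e2 ⊢
          rw [e1, e2]
        · simp only [Bool.not_true] at e1 e2 ⊢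
          rw [max_comm, e1, e2]
      rw [hmk', hb1]
      apply max_lt <;> linarith
    have hbadb : (1+ε)*y < load p x b := by rw [← hb1, hmk]; exact hbad
    have hWr : load p x (!b) = W - load p x b := by
      have h0 := load_add_load p x
      cases b <;> simp only [Bool.not_false, Bool.not_true] <;> linarith
    have hlarge : ∀ j, x j = b → 2*ε*y < p j := by
      intro j hj
      have h1 := key j hj
      rw [hWr] at h1
      linarith
    have hidx : ∀ j, x j = b → (j:ℕ) < s := by
      intro j hj
      by_contra hge
      push_neg at hge
      set T : Finset (Fin n) := Finset.univ.filter (fun i => (i:ℕ) ≤ s) with hT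
      have hcardT : s + 1 ≤ T.card := by
        have : (Finset.range (s+1)).card ≤ T.card := by
          apply Finset.card_le_card_of_injOn (fun m => (⟨m % n, Nat.mod_lt _ (by omega)⟩ : Fin n))
          · intro m hm
            simp only [Finset.mem_coe, Finset.mem_range] at hm
            simp only [Finset.mem_coe, hT, Finset.mem_filter, Finset.mem_univ, true_and]
            simp [Nat.mod_eq_of_lt (by omega : m < n)]; omega
          · intro a ha b hb hab
            simp only [Finset.mem_coe, Finset.mem_range] at ha hb
            have := congrArg Fin.val hab
            simpa [Nat.mod_eq_of_lt (by omega : a < n), Nat.mod_eq_of_lt (by omega : b < n)]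
              using this
        simpa using this
      have hsumT : ∑ i ∈ T, p i ≤ W := by
        apply Finset.sum_le_sum_of_subset_of_nonneg (Finset.subset_univ T)
        intro i _ _; exact (hpos i).le
      have hbig : ∀ i ∈ T, 2*ε*y ≤ p i := by
        intro i hi
        simp only [hT, Finset.mem_filter, Finset.mem_univ, true_and] at hi
        have hij : i ≤ j := by
          rw [Fin.le_def]; omega
        exact le_trans (hlarge j hj).le (hmono i j hij)
      have h3 : (T.card : ℝ) * (2*ε*y) ≤ ∑ i ∈ T, p i := by
        have := Finset.card_nsmul_le_sum T p (2*ε*y) hbig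
        simpa [nsmul_eq_mul] using this
      have h4 : ((s:ℝ)+1) * (2*ε*y) ≤ (T.card : ℝ) * (2*ε*y) := by
        apply mul_le_mul_of_nonneg_right
        · exact_mod_cast hcardT
        · positivity
      have h5 : 2 ≤ ((s:ℝ)+1) * ε := by
        rw [div_le_iff₀ hε0] at hs1
        linarith
      nlinarith
    refine Finset.mem_coe.mpr (Finset.mem_image.mpr
      ⟨Finset.univ.filter (fun i => x i = b), ?_, ?_⟩)
    · rw [Finset.mem_powerset]
      intro i hi
      simp only [Finset.mem_filter, Finset.mem_univ, true_and] at hi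
      simp only [hL, Finset.mem_filter, Finset.mem_univ, true_and]
      exact hidx i hi
    · rw [← hmk, hb1, load]
  have hLcard : L.card ≤ s := by
    have : L.card ≤ (Finset.range s).card := by
      apply Finset.card_le_card_of_injOn (fun i : Fin n => (i:ℕ))
      · intro i hi
        simp only [Finset.mem_coe, hL, Finset.mem_filter, Finset.mem_univ, true_and] at hi
        simpa using hi
      · intro a _ b _ hab
        exact Fin.val_injective hab
    simpa using this
  have h1 : {y : ℝ | ∃ x : Fin n → Bool, IsLocalOpt p x ∧ makespan p x = y ∧
        (1 + ε) * optMakespan p < y}.ncard ≤ F.card := by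
    rw [← Set.ncard_coe_finset]
    exact Set.ncard_le_ncard hsub (Finset.finite_toSet _)
  have h2 : F.card ≤ 2 ^ s := by
    calc F.card ≤ L.powerset.card := Finset.card_image_le
    _ = 2 ^ L.card := Finset.card_powerset L
    _ ≤ 2 ^ s := Nat.pow_le_pow_right (by norm_num) hLcard
  calc (({y : ℝ | ∃ x : Fin n → Bool, IsLocalOpt p x ∧ makespan p x = y ∧
        (1 + ε) * optMakespan p < y}.ncard : ℝ))
      ≤ ((2 ^ s : ℕ) : ℝ) := by exact_mod_cast h1.trans h2
    _ = (2:ℝ) ^ ((s:ℕ):ℝ) := by rw [Real.rpow_natCast]; push_cast; ring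
    _ ≤ (2:ℝ) ^ ((2:ℝ)/ε) := Real.rpow_le_rpow_of_exponent_le one_le_two hs2
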